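/- Let f be μ-strongly convex (with respect to the Euclidean norm) over D = conv(A) for a finite atom set A. Then the geometric strong convexity constant satisfies μ_f^A ≥ μ · PWidth(A)², where PWidth(A) is the pyramidal width of A. -/

import Mathlib

open scoped InnerProductSpace

/-- The possible active sets for `x` within the atom set `V`. -/
def activeSets {d : ℕ} (V : Set (EuclideanSpace ℝ (Fin d))) (x : EuclideanSpace ℝ (Fin d)) :
    Set (Finset (EuclideanSpace ℝ (Fin d))) :=
  {S | ↑S ⊆ V ∧ ∃ α : EuclideanSpace ℝ (Fin d) → ℝ,
    (∀ v ∈ S, 0 < α v) ∧ (∑ v ∈ S, α v) = 1 ∧ x = ∑ v ∈ S, α v • v}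

/-- The pyramidal directional width of the atom set `V` w.r.t. direction `r` and base
point `x`. -/
noncomputable def PdirW {d : ℕ} (V : Set (EuclideanSpace ℝ (Fin d)))
    (r x : EuclideanSpace ℝ (Fin d)) : ℝ :=
  sInf {w | ∃ S ∈ activeSets V x,
    w = sSup {t | ∃ s ∈ V, ∃ v ∈ (S : Set (EuclideanSpace ℝ (Fin d))),
      t = ⟪‖r‖⁻¹ • r, s - v⟫_ℝ}}

/-- The pyramidal width of a finite atom set `A`: minimum of `PdirW` over faces `K` of
`conv(A)`, base points `x ∈ K`, and nonzero feasible directions `r ∈ cone(K - x)`. -/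
noncomputable def PWidth {d : ℕ} (A : Finset (EuclideanSpace ℝ (Fin d))) : ℝ :=
  sInf {w | ∃ K : Set (EuclideanSpace ℝ (Fin d)),
    IsExposed ℝ (convexHull ℝ (↑A : Set (EuclideanSpace ℝ (Fin d)))) K ∧
    ∃ x ∈ K, ∃ r : EuclideanSpace ℝ (Fin d), r ≠ 0 ∧
      (∃ c : ℝ, 0 ≤ c ∧ ∃ y ∈ K, r = c • (y - x)) ∧
      w = PdirW (K ∩ ↑A) r x}

/-- The step-size quantity `γ^A(x, x*)` used in the definition of `μ_f^A`. -/
noncomputable def gammaA {d : ℕ}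
    (f' : EuclideanSpace ℝ (Fin d) → EuclideanSpace ℝ (Fin d))
    (A : Finset (EuclideanSpace ℝ (Fin d))) (x y : EuclideanSpace ℝ (Fin d)) : ℝ :=
  ⟪-f' x, y - x⟫_ℝ /
    (sInf {t | ∃ S ∈ activeSets (↑A) x,
        t = sSup {u | ∃ v ∈ (S : Set (EuclideanSpace ℝ (Fin d))), u = ⟪f' x, v⟫_ℝ}} -
      sInf {t | ∃ v ∈ (↑A : Set (EuclideanSpace ℝ (Fin d))), t = ⟪f' x, v⟫_ℝ})

/-- The geometric strong convexity constant `μ_f^A` of `f` over `conv(A)`. -/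
noncomputable def mufA {d : ℕ} (f : EuclideanSpace ℝ (Fin d) → ℝ)
    (f' : EuclideanSpace ℝ (Fin d) → EuclideanSpace ℝ (Fin d))
    (A : Finset (EuclideanSpace ℝ (Fin d))) : ℝ :=
  sInf {c | ∃ x ∈ convexHull ℝ (↑A : Set (EuclideanSpace ℝ (Fin d))),
    ∃ y ∈ convexHull ℝ (↑A : Set (EuclideanSpace ℝ (Fin d))),
      ⟪f' x, y - x⟫_ℝ < 0 ∧
      c = 2 / gammaA f' A x y ^ 2 * (f y - f x - ⟪f' x, y - x⟫_ℝ)}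

variable {d : ℕ}

noncomputable local instance : DecidableEq (EuclideanSpace ℝ (Fin d)) := Classical.decEq _

/-- The conical hull of a finite set of generators. -/
def coneOf (G : Finset (EuclideanSpace ℝ (Fin d))) : Set (EuclideanSpace ℝ (Fin d)) :=
  {z | ∃ c : EuclideanSpace ℝ (Fin d) → ℝ, (∀ g ∈ G, 0 ≤ c g) ∧ z = ∑ g ∈ G, c g • g}

lemma coneOf_zero_mem (G : Finset (EuclideanSpace ℝ (Fin d))) : (0 : EuclideanSpace ℝ (Fin d)) ∈ coneOf G :=
  ⟨fun _ => 0, fun _ _ => le_rfl, by simp⟩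

lemma coneOf_add_mem {G : Finset (EuclideanSpace ℝ (Fin d))} {z₁ z₂ : EuclideanSpace ℝ (Fin d)}
    (h₁ : z₁ ∈ coneOf G) (h₂ : z₂ ∈ coneOf G) : z₁ + z₂ ∈ coneOf G := by
  obtain ⟨c₁, hc₁, rfl⟩ := h₁
  obtain ⟨c₂, hc₂, rfl⟩ := h₂
  exact ⟨fun g => c₁ g + c₂ g, fun g hg => add_nonneg (hc₁ g hg) (hc₂ g hg), by
    rw [← Finset.sum_add_distrib]; exact Finset.sum_congr rfl fun g _ => (add_smul _ _ _).symm⟩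

lemma coneOf_smul_mem {G : Finset (EuclideanSpace ℝ (Fin d))} {z : EuclideanSpace ℝ (Fin d)}
    {t : ℝ} (ht : 0 ≤ t) (h : z ∈ coneOf G) : t • z ∈ coneOf G := by
  obtain ⟨c, hc, rfl⟩ := h
  exact ⟨fun g => t * c g, fun g hg => mul_nonneg ht (hc g hg), by
    rw [Finset.smul_sum]; exact Finset.sum_congr rfl fun g _ => (smul_smul _ _ _)⟩

lemma coneOf_gen_mem {G : Finset (EuclideanSpace ℝ (Fin d))} {g₀ : EuclideanSpace ℝ (Fin d)}
    (hg₀ : g₀ ∈ G) {t : ℝ} (ht : 0 ≤ t) : t • g₀ ∈ coneOf G := by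
  classical
  refine ⟨fun g => if g = g₀ then t else 0, fun g _ => by beta_reduce; split <;> simp [ht], ?_⟩
  have : (∑ g ∈ G, (if g = g₀ then t else 0) • g)
      = ∑ g ∈ G, (if g = g₀ then t • g₀ else 0) := by
    refine Finset.sum_congr rfl fun g _ => ?_
    split <;> simp_all
  rw [this, Finset.sum_ite_eq' G g₀ (fun _ => t • g₀), if_pos hg₀]

lemma coneOf_convex (G : Finset (EuclideanSpace ℝ (Fin d))) : Convex ℝ (coneOf G) :=
  fun _ hx _ hy a b ha hb _ =>
    coneOf_add_mem (coneOf_smul_mem ha hx) (coneOf_smul_mem hb hy)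

lemma coneOf_sum_mem {ι : Type*} {G : Finset (EuclideanSpace ℝ (Fin d))} (s : Finset ι)
    (f : ι → EuclideanSpace ℝ (Fin d)) (h : ∀ i ∈ s, f i ∈ coneOf G) :
    (∑ i ∈ s, f i) ∈ coneOf G :=
  Finset.sum_induction f _ (fun _ _ => coneOf_add_mem) (coneOf_zero_mem G) h

/-- "Conically independent" predicate used in Carathéodory's theorem for cones. -/
def IndepF (B : Finset (EuclideanSpace ℝ (Fin d))) : Prop :=
  ∀ lam : EuclideanSpace ℝ (Fin d) → ℝ,
    (∑ g ∈ B, lam g • g) = 0 → ∀ g ∈ B, lam g = 0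

lemma carath (n : ℕ) : ∀ G : Finset (EuclideanSpace ℝ (Fin d)), G.card ≤ n →
    ∀ z ∈ coneOf G, ∃ B ⊆ G, IndepF B ∧ z ∈ coneOf B := by
  induction n with
  | zero =>
    intro G hG z hz
    have : G = ∅ := Finset.card_eq_zero.mp (Nat.le_zero.mp hG)
    subst this
    exact ⟨∅, subset_rfl, fun lam _ g hg => absurd hg (Finset.notMem_empty g), hz⟩
  | succ n ih =>
    intro G hG z hz
    obtain ⟨c, hc0, hzeq⟩ := hz
    classical
    by_cases hzero : ∃ g ∈ G, c g = 0
    · obtain ⟨g₀, hg₀, hcg₀⟩ := hzero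
      have hz' : z ∈ coneOf (G.erase g₀) := by
        refine ⟨c, fun g hg => hc0 g (Finset.mem_of_mem_erase hg), ?_⟩
        rw [hzeq, ← Finset.sum_erase (a := g₀) G (f := fun g => c g • g) (by show c g₀ • g₀ = 0; rw [hcg₀, zero_smul])]
      obtain ⟨B, hBsub, hBind, hzB⟩ := ih (G.erase g₀)
        (by have := Finset.card_erase_lt_of_mem hg₀; omega) z hz'
      exact ⟨B, hBsub.trans (Finset.erase_subset _ _), hBind, hzB⟩
    · push_neg at hzero
      have hcpos : ∀ g ∈ G, 0 < c g := fun g hg => (hc0 g hg).lt_of_ne' (hzero g hg)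
      by_cases hind : IndepF G
      · exact ⟨G, subset_rfl, hind, c, hc0, hzeq⟩
      · simp only [IndepF, not_forall] at hind
        obtain ⟨lam₀, hlamsum, g₀, hg₀G, hg₀ne⟩ := hind
        -- arrange a coefficient that is positive
        obtain ⟨lam, hlsum, hlpos⟩ :
            ∃ lam : EuclideanSpace ℝ (Fin d) → ℝ,
              (∑ g ∈ G, lam g • g) = 0 ∧ ∃ g ∈ G, 0 < lam g := by
          rcases lt_or_gt_of_ne hg₀ne with h | h
          · exact ⟨fun g => -lam₀ g, by
              simp only [neg_smul, Finset.sum_neg_distrib, hlamsum, neg_zero],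
              g₀, hg₀G, by show (0:ℝ) < -lam₀ g₀; linarith⟩
          · exact ⟨lam₀, hlamsum, g₀, hg₀G, h⟩
        set T := G.filter (fun g => 0 < lam g) with hT
        have hTne : T.Nonempty := by
          obtain ⟨g₁, hg₁G, hg₁⟩ := hlpos
          exact ⟨g₁, Finset.mem_filter.mpr ⟨hg₁G, hg₁⟩⟩
        obtain ⟨g₁, hg₁T, hg₁min⟩ := T.exists_min_image (fun g => c g / lam g) hTne
        have hg₁G : g₁ ∈ G := (Finset.mem_filter.mp hg₁T).1
        have hg₁l : 0 < lam g₁ := (Finset.mem_filter.mp hg₁T).2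
        set t := c g₁ / lam g₁ with htdef
        have ht0 : 0 ≤ t := div_nonneg (hc0 g₁ hg₁G) hg₁l.le
        set c' := fun g => c g - t * lam g with hc'
        have hc'0 : ∀ g ∈ G, 0 ≤ c' g := by
          intro g hg
          by_cases hlg : 0 < lam g
          · have := hg₁min g (Finset.mem_filter.mpr ⟨hg, hlg⟩)
            have : t * lam g ≤ c g := by
              rw [htdef]
              rw [div_le_div_iff₀ hg₁l hlg] at this
              calc c g₁ / lam g₁ * lam g ≤ c g / lam g * lam g := by
                    apply mul_le_mul_of_nonneg_right (hg₁min g (Finset.mem_filter.mpr ⟨hg, hlg⟩)) hlg.le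
                _ = c g := by field_simp
            simp only [hc']; linarith
          · push_neg at hlg
            have : t * lam g ≤ 0 := mul_nonpos_of_nonneg_of_nonpos ht0 hlg
            have := hc0 g hg
            simp only [hc']; linarith
        have hc'g₁ : c' g₁ = 0 := by
          simp only [hc', htdef]; field_simp; ring
        have hz' : z ∈ coneOf (G.erase g₁) := by
          refine ⟨c', fun g hg => hc'0 g (Finset.mem_of_mem_erase hg), ?_⟩
          rw [Finset.sum_erase (a := g₁) G (f := fun g => c' g • g) (by show c' g₁ • g₁ = 0; rw [hc'g₁, zero_smul])]
          have : ∑ g ∈ G, c' g • g = ∑ g ∈ G, (c g • g - t • (lam g • g)) := by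
            refine Finset.sum_congr rfl fun g _ => ?_
            simp only [hc', sub_smul, smul_smul]
          rw [this, Finset.sum_sub_distrib, ← Finset.smul_sum, hlsum, smul_zero, sub_zero, hzeq]
        obtain ⟨B, hBsub, hBind, hzB⟩ := ih (G.erase g₁)
          (by have := Finset.card_erase_lt_of_mem hg₁G; omega) z hz'
        exact ⟨B, hBsub.trans (Finset.erase_subset _ _), hBind, hzB⟩

lemma coneOf_isClosed_of_indep {B : Finset (EuclideanSpace ℝ (Fin d))} (hB : IndepF B) :
    IsClosed (coneOf B) := by
  classical
  set ψ : ((↥B) → ℝ) →ₗ[ℝ] EuclideanSpace ℝ (Fin d) :=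
    Fintype.linearCombination (R := ℝ) (fun i : ↥B => (i : EuclideanSpace ℝ (Fin d))) with hψ
  have hψ_apply : ∀ c : (↥B) → ℝ, ψ c = ∑ i : ↥B, c i • (i : EuclideanSpace ℝ (Fin d)) := by
    intro c; rfl
  have hext : ∀ c : (↥B) → ℝ,
      ψ c = ∑ g ∈ B, (fun g => if h : g ∈ B then c ⟨g, h⟩ else 0) g • g := by
    intro c
    rw [hψ_apply, Finset.univ_eq_attach, ← Finset.sum_attach B
      (fun g => (fun g => if h : g ∈ B then c ⟨g, h⟩ else 0) g • g)]
    refine Finset.sum_congr rfl fun i _ => ?_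
    simp [i.2]
  have hker : LinearMap.ker ψ = ⊥ := by
    rw [LinearMap.ker_eq_bot']
    intro c hc
    funext i
    have := hB (fun g => if h : g ∈ B then c ⟨g, h⟩ else 0) (by rw [← hext c, hc]) i i.2
    simpa [i.2] using this
    
  have hclosed : IsClosed (ψ '' {c | ∀ i, 0 ≤ c i}) := by
    refine (LinearMap.isClosedEmbedding_of_injective hker).isClosedMap _ ?_
    have : {c : (↥B) → ℝ | ∀ i, 0 ≤ c i} = ⋂ i, {c | 0 ≤ c i} := by
      ext c; simp [Set.mem_iInter]
    rw [this]
    exact isClosed_iInter fun i => isClosed_le continuous_const (continuous_apply i)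
  have himage : coneOf B = ψ '' {c | ∀ i, 0 ≤ c i} := by
    ext z
    constructor
    · rintro ⟨c, hc0, rfl⟩
      refine ⟨fun i => c i, fun i => hc0 i i.2, ?_⟩
      rw [hψ_apply, Finset.univ_eq_attach, Finset.sum_attach B (fun g => c g • g)]
    · rintro ⟨c, hc0, rfl⟩
      refine ⟨fun g => if h : g ∈ B then c ⟨g, h⟩ else 0, fun g hg => by simp only []; rw [dif_pos hg]; exact hc0 _, ?_⟩
      exact hext c
  rw [himage]
  exact hclosed

lemma coneOf_isClosed (G : Finset (EuclideanSpace ℝ (Fin d))) : IsClosed (coneOf G) := by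
  have hunion : coneOf G = ⋃ B ∈ {B : Finset (EuclideanSpace ℝ (Fin d)) | B ⊆ G ∧ IndepF B},
      coneOf B := by
    ext z
    simp only [Set.mem_iUnion, Set.mem_setOf_eq]
    constructor
    · intro hz
      obtain ⟨B, hBsub, hBind, hzB⟩ := carath G.card G le_rfl z hz
      exact ⟨B, ⟨hBsub, hBind⟩, hzB⟩
    · rintro ⟨B, ⟨hBsub, _⟩, c, hc0, rfl⟩
      classical
      refine ⟨fun g => if g ∈ B then c g else 0, fun g _ => by beta_reduce; split <;> [exact hc0 _ ‹_›; rfl], ?_⟩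
      rw [← Finset.sum_subset hBsub (fun g _ hgB => by simp [hgB])]
      refine Finset.sum_congr rfl fun g hg => by simp [hg]
  rw [hunion]
  refine Set.Finite.isClosed_biUnion ?_ fun B hB => coneOf_isClosed_of_indep hB.2
  exact (G.powerset.finite_toSet).subset fun B hB => Finset.mem_coe.mpr (Finset.mem_powerset.mpr hB.1)

lemma exists_proj (F : Set (EuclideanSpace ℝ (Fin d))) (hne : (0 : EuclideanSpace ℝ (Fin d)) ∈ F)
    (hcl : IsClosed F) (hconv : Convex ℝ F)
    (hsmul : ∀ t : ℝ, 0 ≤ t → ∀ z ∈ F, t • z ∈ F) (g : EuclideanSpace ℝ (Fin d)) :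
    ∃ g' ∈ F, (∀ z ∈ F, ⟪g - g', z⟫_ℝ ≤ 0) ∧ ⟪g - g', g'⟫_ℝ = 0 := by
  obtain ⟨g', hg'F, hmin⟩ := exists_norm_eq_iInf_of_complete_convex ⟨0, hne⟩
    hcl.isComplete hconv g
  have hchar := (norm_eq_iInf_iff_real_inner_le_zero hconv hg'F).mp hmin
  have h1 : ⟪g - g', g'⟫_ℝ ≤ 0 := by
    have := hchar ((2 : ℝ) • g') (hsmul 2 (by norm_num) g' hg'F)
    have h2g : (2 : ℝ) • g' - g' = g' := by
      rw [two_smul]; abel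
    rwa [h2g] at this
  have h2 : 0 ≤ ⟪g - g', g'⟫_ℝ := by
    have := hchar 0 hne
    rw [zero_sub, inner_neg_right] at this
    linarith
  have horth : ⟪g - g', g'⟫_ℝ = 0 := le_antisymm h1 h2
  refine ⟨g', hg'F, fun z hz => ?_, horth⟩
  have := hchar z hz
  rw [inner_sub_right] at this
  linarith

lemma wsum_sub (A : Finset (EuclideanSpace ℝ (Fin d))) (w : EuclideanSpace ℝ (Fin d) → ℝ)
    (hw1 : ∑ a ∈ A, w a = 1) (x : EuclideanSpace ℝ (Fin d)) :
    ∑ a ∈ A, w a • (a - x) = (∑ a ∈ A, w a • a) - x := by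
  rw [show ∑ a ∈ A, w a • (a - x) = ∑ a ∈ A, (w a • a - w a • x) from
      Finset.sum_congr rfl fun a _ => smul_sub _ _ _,
    Finset.sum_sub_distrib, ← Finset.sum_smul, hw1, one_smul]

/-- Any nonnegative multiple of a direction into the hull lies in the feasible cone. -/
lemma mem_feasCone (A : Finset (EuclideanSpace ℝ (Fin d))) (x y : EuclideanSpace ℝ (Fin d))
    (hy : y ∈ convexHull ℝ (↑A : Set (EuclideanSpace ℝ (Fin d)))) {c : ℝ} (hc : 0 ≤ c) :
    c • (y - x) ∈ coneOf (A.image (fun a => a - x)) := by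
  rw [Finset.convexHull_eq] at hy
  obtain ⟨w, hw0, hw1, hwy⟩ := hy
  rw [Finset.centerMass_eq_of_sum_1 _ _ hw1] at hwy
  simp only [id_eq] at hwy
  have : c • (y - x) = ∑ a ∈ A, (c * w a) • (a - x) := by
    rw [show ∑ a ∈ A, (c * w a) • (a - x) = c • ∑ a ∈ A, w a • (a - x) by
        rw [Finset.smul_sum]; exact Finset.sum_congr rfl fun a _ => (smul_smul _ _ _).symm,
      wsum_sub A w hw1 x]
    rw [hwy]
  rw [this]
  exact coneOf_sum_mem A _ fun a ha =>
    coneOf_gen_mem (Finset.mem_image_of_mem _ ha) (mul_nonneg hc (hw0 a ha))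

/-- Conversely, every nonzero element of the feasible cone is a positive multiple of a
direction into the hull. -/
lemma feasCone_rep (A : Finset (EuclideanSpace ℝ (Fin d))) (x : EuclideanSpace ℝ (Fin d))
    {z : EuclideanSpace ℝ (Fin d)} (hz : z ∈ coneOf (A.image (fun a => a - x)))
    (hzne : z ≠ 0) :
    ∃ T : ℝ, 0 < T ∧ ∃ y ∈ convexHull ℝ (↑A : Set (EuclideanSpace ℝ (Fin d))),
      z = T • (y - x) := by
  obtain ⟨c, hc0, hzeq⟩ := hz
  have hinj : Set.InjOn (fun a => a - x) ↑A := fun a _ b _ h => by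
    have := congrArg (· + x) h; simpa using this
  rw [Finset.sum_image hinj] at hzeq
  set cA := fun a => c (a - x) with hcA
  have hcA0 : ∀ a ∈ A, 0 ≤ cA a := fun a ha =>
    hc0 _ (Finset.mem_image_of_mem _ ha)
  set T := ∑ a ∈ A, cA a with hTdef
  have hT0 : 0 ≤ T := Finset.sum_nonneg hcA0
  rcases hT0.eq_or_lt with hT | hT
  · exfalso
    apply hzne
    have hall : ∀ a ∈ A, cA a = 0 := (Finset.sum_eq_zero_iff_of_nonneg hcA0).mp hT.symm
    rw [hzeq]
    exact Finset.sum_eq_zero fun a ha => by have := hall a ha; simp only [hcA] at this; rw [this, zero_smul]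
  · refine ⟨T, hT, ∑ a ∈ A, (cA a / T) • a, ?_, ?_⟩
    · refine (convex_convexHull ℝ _).sum_mem (fun a ha => div_nonneg (hcA0 a ha) hT.le)
        (by rw [← Finset.sum_div, ← hTdef, div_self hT.ne']) fun a ha => subset_convexHull ℝ _ ha
    · have hws : ∑ a ∈ A, cA a / T = 1 := by
        rw [← Finset.sum_div, ← hTdef, div_self hT.ne']
      rw [show (∑ a ∈ A, (cA a / T) • a : EuclideanSpace ℝ (Fin d)) - x
          = ∑ a ∈ A, (cA a / T) • (a - x) from (wsum_sub A _ hws x).symm,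
        Finset.smul_sum, hzeq]
      refine Finset.sum_congr rfl fun a ha => ?_
      rw [smul_smul, mul_div_cancel₀ _ hT.ne']

lemma pat2_finite {V : Set (EuclideanSpace ℝ (Fin d))} (hV : V.Finite)
    (S : Finset (EuclideanSpace ℝ (Fin d))) (F : EuclideanSpace ℝ (Fin d) → EuclideanSpace ℝ (Fin d) → ℝ) :
    {t | ∃ s ∈ V, ∃ v ∈ (S : Set (EuclideanSpace ℝ (Fin d))), t = F s v}.Finite := by
  have : {t | ∃ s ∈ V, ∃ v ∈ (S : Set (EuclideanSpace ℝ (Fin d))), t = F s v}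
      ⊆ (fun p : EuclideanSpace ℝ (Fin d) × EuclideanSpace ℝ (Fin d) => F p.1 p.2) ''
        (V ×ˢ (S : Set (EuclideanSpace ℝ (Fin d)))) := by
    rintro t ⟨s, hs, v, hv, rfl⟩
    exact ⟨(s, v), ⟨hs, hv⟩, rfl⟩
  exact Set.Finite.subset (Set.Finite.image _ (hV.prod S.finite_toSet)) this

lemma pat1_finite {V : Set (EuclideanSpace ℝ (Fin d))} (hV : V.Finite)
    (F : EuclideanSpace ℝ (Fin d) → ℝ) : {t | ∃ v ∈ V, t = F v}.Finite := by
  have : {t | ∃ v ∈ V, t = F v} ⊆ F '' V := by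
    rintro t ⟨v, hv, rfl⟩; exact ⟨v, hv, rfl⟩
  exact Set.Finite.subset (hV.image F) this

lemma active_nonempty {V : Set (EuclideanSpace ℝ (Fin d))} {x S}
    (hS : S ∈ activeSets V x) : S.Nonempty := by
  obtain ⟨-, α, -, h1, -⟩ := hS
  rcases Finset.eq_empty_or_nonempty S with rfl | h
  · simp at h1
  · exact h

lemma activeSets_exists {A : Finset (EuclideanSpace ℝ (Fin d))} {x : EuclideanSpace ℝ (Fin d)}
    (hx : x ∈ convexHull ℝ (↑A : Set (EuclideanSpace ℝ (Fin d)))) :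
    ∃ S, S ∈ activeSets (↑A : Set (EuclideanSpace ℝ (Fin d))) x := by
  classical
  rw [Finset.convexHull_eq] at hx
  obtain ⟨w, hw0, hw1, hwx⟩ := hx
  rw [Finset.centerMass_eq_of_sum_1 _ _ hw1] at hwx
  simp only [id_eq] at hwx
  refine ⟨A.filter (fun a => w a ≠ 0), ?_, w, ?_, ?_, ?_⟩
  · intro a ha
    simp only [Finset.coe_filter, Set.mem_setOf_eq] at ha
    exact ha.1
  · intro a ha
    obtain ⟨haA, hane⟩ := Finset.mem_filter.mp ha
    exact (hw0 a haA).lt_of_ne' hane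
  · rw [Finset.sum_filter_ne_zero A, hw1]
  · rw [Finset.sum_filter_of_ne fun a _ hne => by
      intro h; apply hne; rw [h, zero_smul], hwx]

lemma inner_le_sSup_active {V : Set (EuclideanSpace ℝ (Fin d))}
    {x : EuclideanSpace ℝ (Fin d)} {S} (hS : S ∈ activeSets V x)
    (p : EuclideanSpace ℝ (Fin d)) :
    ⟪p, x⟫_ℝ ≤ sSup {u | ∃ v ∈ (S : Set (EuclideanSpace ℝ (Fin d))), u = ⟪p, v⟫_ℝ} := by
  obtain ⟨hsub, α, hpos, h1, hxeq⟩ := hS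
  set uS := sSup {u | ∃ v ∈ (S : Set (EuclideanSpace ℝ (Fin d))), u = ⟪p, v⟫_ℝ} with huS
  have hbdd : BddAbove {u | ∃ v ∈ (S : Set (EuclideanSpace ℝ (Fin d))), u = ⟪p, v⟫_ℝ} :=
    (pat1_finite S.finite_toSet _).bddAbove
  have hle : ∀ v ∈ S, ⟪p, v⟫_ℝ ≤ uS := fun v hv => le_csSup hbdd ⟨v, hv, rfl⟩
  have : ⟪p, x⟫_ℝ = ∑ v ∈ S, α v * ⟪p, v⟫_ℝ := by
    rw [hxeq, inner_sum]
    exact Finset.sum_congr rfl fun v _ => real_inner_smul_right _ _ _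
  rw [this]
  calc ∑ v ∈ S, α v * ⟪p, v⟫_ℝ ≤ ∑ v ∈ S, α v * uS :=
        Finset.sum_le_sum fun v hv => mul_le_mul_of_nonneg_left (hle v hv) (hpos v hv).le
    _ = uS := by rw [← Finset.sum_mul, h1, one_mul]

lemma pdirw_elem_nonneg {V : Set (EuclideanSpace ℝ (Fin d))} (hV : V.Finite)
    (r x : EuclideanSpace ℝ (Fin d)) :
    ∀ w ∈ {w | ∃ S ∈ activeSets V x,
      w = sSup {t | ∃ s ∈ V, ∃ v ∈ (S : Set (EuclideanSpace ℝ (Fin d))),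
        t = ⟪‖r‖⁻¹ • r, s - v⟫_ℝ}}, 0 ≤ w := by
  rintro w ⟨S, hS, rfl⟩
  obtain ⟨v₀, hv₀⟩ := active_nonempty hS
  have hv₀V : v₀ ∈ V := hS.1 hv₀
  refine le_csSup ((pat2_finite hV S _).bddAbove) ?_
  exact ⟨v₀, hv₀V, v₀, hv₀, by simp⟩

lemma pdirw_nonneg {V : Set (EuclideanSpace ℝ (Fin d))} (hV : V.Finite)
    (r x : EuclideanSpace ℝ (Fin d)) : 0 ≤ PdirW V r x :=
  Real.sInf_nonneg (pdirw_elem_nonneg hV r x)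

lemma pwidth_elem_nonneg (A : Finset (EuclideanSpace ℝ (Fin d))) :
    ∀ w ∈ {w | ∃ K : Set (EuclideanSpace ℝ (Fin d)),
      IsExposed ℝ (convexHull ℝ (↑A : Set (EuclideanSpace ℝ (Fin d)))) K ∧
      ∃ x ∈ K, ∃ r : EuclideanSpace ℝ (Fin d), r ≠ 0 ∧
        (∃ c : ℝ, 0 ≤ c ∧ ∃ y ∈ K, r = c • (y - x)) ∧
        w = PdirW (K ∩ ↑A) r x}, 0 ≤ w := by
  rintro w ⟨K, hK, x, hx, r, hr, hfeas, rfl⟩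
  exact pdirw_nonneg (A.finite_toSet.subset Set.inter_subset_right) r x

lemma pwidth_nonneg (A : Finset (EuclideanSpace ℝ (Fin d))) : 0 ≤ PWidth A :=
  Real.sInf_nonneg (pwidth_elem_nonneg A)

/-- Key geometric inequality: for any active set `S` of `x`, the pyramidal width bounds
the ratio of the away-FW gap to the normalized descent. -/
lemma key_ineq (A : Finset (EuclideanSpace ℝ (Fin d)))
    {x y : EuclideanSpace ℝ (Fin d)}
    (hx : x ∈ convexHull ℝ (↑A : Set (EuclideanSpace ℝ (Fin d))))
    (hy : y ∈ convexHull ℝ (↑A : Set (EuclideanSpace ℝ (Fin d))))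
    (p : EuclideanSpace ℝ (Fin d)) (hneg : ⟪p, y - x⟫_ℝ < 0)
    {S : Finset (EuclideanSpace ℝ (Fin d))}
    (hS : S ∈ activeSets (↑A : Set (EuclideanSpace ℝ (Fin d))) x) :
    PWidth A * (-⟪p, y - x⟫_ℝ / ‖y - x‖) +
      sInf {t | ∃ v ∈ (↑A : Set (EuclideanSpace ℝ (Fin d))), t = ⟪p, v⟫_ℝ} ≤
      sSup {u | ∃ v ∈ (S : Set (EuclideanSpace ℝ (Fin d))), u = ⟪p, v⟫_ℝ} := by
  classical
  set D := convexHull ℝ (↑A : Set (EuclideanSpace ℝ (Fin d))) with hD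
  set e := y - x with he
  set g := -p with hg
  have hN : 0 < ⟪g, e⟫_ℝ := by rw [hg, inner_neg_left]; linarith
  have hene : e ≠ 0 := by
    intro h; rw [h, inner_zero_right] at hN; linarith
  have hLpos : 0 < ‖e‖ := norm_pos_iff.mpr hene
  set F := coneOf (A.image (fun a => a - x)) with hF
  have hFD : ∀ w ∈ D, w - x ∈ F := by
    intro w hw
    have := mem_feasCone A x w hw (c := 1) zero_le_one
    rwa [one_smul] at this
  obtain ⟨g', hg'F, hg''le, horth⟩ := exists_proj F (coneOf_zero_mem _)
    (coneOf_isClosed _) (coneOf_convex _) (fun t ht z hz => coneOf_smul_mem ht hz) g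
  have heF : e ∈ F := hFD y hy
  have hge : ⟪g, e⟫_ℝ ≤ ⟪g', e⟫_ℝ := by
    have := hg''le e heF
    rw [inner_sub_left] at this; linarith
  have hg'norm : ⟪g, e⟫_ℝ ≤ ‖g'‖ * ‖e‖ :=
    hge.trans ((real_inner_le_norm g' e))
  have hg'ne : g' ≠ 0 := by
    intro h
    rw [h, norm_zero, zero_mul] at hg'norm; linarith
  have hg'pos : 0 < ‖g'‖ := norm_pos_iff.mpr hg'ne
  set gpp := g - g' with hgpp
  -- the exposed face
  set K := {z ∈ D | ∀ w ∈ D, (innerSL ℝ gpp) w ≤ (innerSL ℝ gpp) z} with hK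
  have hexp : IsExposed ℝ D K := fun _ => ⟨innerSL ℝ gpp, rfl⟩
  have hmemK : ∀ z, z ∈ K ↔ z ∈ D ∧ ∀ w ∈ D, ⟪gpp, w⟫_ℝ ≤ ⟪gpp, z⟫_ℝ := by
    intro z
    simp only [hK, Set.mem_setOf_eq, innerSL_apply_apply]
  have hxK : x ∈ K := by
    rw [hmemK]
    refine ⟨hx, fun w hw => ?_⟩
    have := hg''le (w - x) (hFD w hw)
    rw [inner_sub_right] at this; linarith
  -- z ∈ K iff z ∈ D and ⟪gpp, z⟫ = ⟪gpp, x⟫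
  have hKeq : ∀ z ∈ K, ⟪gpp, z⟫_ℝ = ⟪gpp, x⟫_ℝ := by
    intro z hz
    rw [hmemK] at hz
    exact le_antisymm (((hmemK x).mp hxK).2 z hz.1) (hz.2 x hx)
  have hKof : ∀ z ∈ D, ⟪gpp, z - x⟫_ℝ = 0 → z ∈ K := by
    intro z hzD hz0
    rw [inner_sub_right] at hz0
    rw [hmemK]
    refine ⟨hzD, fun w hw => ?_⟩
    have h1 := ((hmemK x).mp hxK).2 w hw
    linarith
  -- the direction g' is feasible within K
  obtain ⟨T, hTpos, y', hy'D, hy'rep⟩ := feasCone_rep A x hg'F hg'ne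
  have hy'K : y' ∈ K := by
    refine hKof y' hy'D ?_
    have : ⟪gpp, g'⟫_ℝ = 0 := horth
    rw [hy'rep, real_inner_smul_right] at this
    have := mul_eq_zero.mp this
    rcases this with h | h
    · exact absurd h hTpos.ne'
    · exact h
  -- the active set lies in K
  obtain ⟨hSsub, α, hαpos, hα1, hxsum⟩ := hS
  have hSK : ∀ v ∈ S, v ∈ K := by
    intro v hv
    have hvD : ∀ v ∈ S, (v : EuclideanSpace ℝ (Fin d)) ∈ D :=
      fun v hv => subset_convexHull ℝ _ (hSsub hv)
    have hsum0 : ∑ v ∈ S, α v * (-⟪gpp, v - x⟫_ℝ) = 0 := by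
      have h1 : ∑ v ∈ S, α v • (v - x) = (0 : EuclideanSpace ℝ (Fin d)) := by
        rw [wsum_sub S α hα1 x, ← hxsum, sub_self]
      have h2 : ∑ v ∈ S, α v * ⟪gpp, v - x⟫_ℝ = ⟪gpp, ∑ v ∈ S, α v • (v - x)⟫_ℝ := by
        rw [inner_sum]
        exact Finset.sum_congr rfl fun v _ => (real_inner_smul_right _ _ _).symm
      have h3 : ∑ v ∈ S, α v * ⟪gpp, v - x⟫_ℝ = 0 := by rw [h2, h1, inner_zero_right]
      have : ∑ v ∈ S, α v * (-⟪gpp, v - x⟫_ℝ) = -∑ v ∈ S, α v * ⟪gpp, v - x⟫_ℝ := by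
        rw [← Finset.sum_neg_distrib]
        exact Finset.sum_congr rfl fun v _ => by ring
      rw [this, h3, neg_zero]
    have hterm : ∀ v ∈ S, 0 ≤ α v * (-⟪gpp, v - x⟫_ℝ) := by
      intro v hv
      refine mul_nonneg (hαpos v hv).le ?_
      have := hg''le (v - x) (hFD v (hvD v hv))
      linarith
    have := (Finset.sum_eq_zero_iff_of_nonneg hterm).mp hsum0 v hv
    have hz : ⟪gpp, v - x⟫_ℝ = 0 := by
      rcases mul_eq_zero.mp this with h | h
      · exact absurd h (hαpos v hv).ne'
      · linarith
    exact hKof v (hvD v hv) hz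
  have hSK' : S ∈ activeSets (K ∩ (↑A : Set (EuclideanSpace ℝ (Fin d)))) x :=
    ⟨fun v hv => ⟨hSK v hv, hSsub hv⟩, α, hαpos, hα1, hxsum⟩
  -- PWidth is at most the pyramidal directional width of this configuration
  have hKAfin : (K ∩ (↑A : Set (EuclideanSpace ℝ (Fin d)))).Finite :=
    A.finite_toSet.subset Set.inter_subset_right
  have hPW1 : PWidth A ≤ PdirW (K ∩ ↑A) g' x := by
    refine csInf_le ⟨0, fun w hw => pwidth_elem_nonneg A w hw⟩ ?_
    exact ⟨K, hexp, x, hxK, g', hg'ne, ⟨T, hTpos.le, y', hy'K, hy'rep⟩, rfl⟩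
  set Q := sSup {t | ∃ s ∈ K ∩ (↑A : Set (EuclideanSpace ℝ (Fin d))),
    ∃ v ∈ (S : Set (EuclideanSpace ℝ (Fin d))), t = ⟪‖g'‖⁻¹ • g', s - v⟫_ℝ} with hQ
  have hPW2 : PdirW (K ∩ ↑A) g' x ≤ Q := by
    refine csInf_le ⟨0, fun w hw => pdirw_elem_nonneg hKAfin g' x w hw⟩ ?_
    exact ⟨S, hSK', rfl⟩
  -- bound Q
  set uS := sSup {u | ∃ v ∈ (S : Set (EuclideanSpace ℝ (Fin d))), u = ⟪p, v⟫_ℝ} with huS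
  set iA := sInf {t | ∃ v ∈ (↑A : Set (EuclideanSpace ℝ (Fin d))), t = ⟪p, v⟫_ℝ} with hiA
  have hbddS : BddAbove {u | ∃ v ∈ (S : Set (EuclideanSpace ℝ (Fin d))), u = ⟪p, v⟫_ℝ} :=
    (pat1_finite S.finite_toSet _).bddAbove
  have hbddA : BddBelow {t | ∃ v ∈ (↑A : Set (EuclideanSpace ℝ (Fin d))), t = ⟪p, v⟫_ℝ} :=
    (pat1_finite A.finite_toSet _).bddBelow
  have hQle : Q ≤ (uS - iA) / ‖g'‖ := by
    obtain ⟨v₀, hv₀⟩ := active_nonempty (V := (↑A : Set (EuclideanSpace ℝ (Fin d))))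
      ⟨hSsub, α, hαpos, hα1, hxsum⟩
    refine csSup_le ⟨0, v₀, ⟨hSK v₀ hv₀, hSsub hv₀⟩, v₀, hv₀, by simp⟩ ?_
    rintro t ⟨s, ⟨hsK, hsA⟩, v, hvS, rfl⟩
    have hgval : ⟪g', s - v⟫_ℝ = ⟪g, s - v⟫_ℝ := by
      have h1 : ⟪gpp, s - v⟫_ℝ = 0 := by
        rw [inner_sub_right, hKeq s hsK, hKeq v (hSK v hvS), sub_self]
      rw [hgpp, inner_sub_left] at h1
      linarith
    have hbound : ⟪g, s - v⟫_ℝ ≤ uS - iA := by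
      have h1 : iA ≤ ⟪p, s⟫_ℝ := csInf_le hbddA ⟨s, hsA, rfl⟩
      have h2 : ⟪p, v⟫_ℝ ≤ uS := le_csSup hbddS ⟨v, hvS, rfl⟩
      have : ⟪g, s - v⟫_ℝ = ⟪p, v⟫_ℝ - ⟪p, s⟫_ℝ := by
        rw [hg, inner_neg_left, inner_sub_right]; ring
      rw [this]; linarith
    rw [real_inner_smul_left, hgval]
    rw [div_eq_inv_mul]
    exact mul_le_mul_of_nonneg_left hbound (inv_nonneg.mpr hg'pos.le)
  -- assemble
  have hQ0 : 0 ≤ Q := by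
    have := hPW2
    have := pdirw_nonneg hKAfin g' x
    linarith
  have hPWQ : PWidth A ≤ Q := hPW1.trans hPW2
  have hfinal : PWidth A * (⟪g, e⟫_ℝ / ‖e‖) ≤ uS - iA := by
    have h1 : ⟪g, e⟫_ℝ / ‖e‖ ≤ ‖g'‖ := by
      rw [div_le_iff₀ hLpos]; linarith
    have h2 : PWidth A * (⟪g, e⟫_ℝ / ‖e‖) ≤ PWidth A * ‖g'‖ :=
      mul_le_mul_of_nonneg_left h1 (pwidth_nonneg A)
    have h3 : PWidth A * ‖g'‖ ≤ Q * ‖g'‖ :=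
      mul_le_mul_of_nonneg_right hPWQ hg'pos.le
    have h4 : Q * ‖g'‖ ≤ uS - iA := by
      have := mul_le_mul_of_nonneg_right hQle hg'pos.le
      rwa [div_mul_cancel₀ _ hg'pos.ne'] at this
    linarith
  have hgid : ⟪g, e⟫_ℝ = -⟪p, y - x⟫_ℝ := by rw [hg, inner_neg_left, he]
  rw [← hgid]
  linarith

/-- If `f` is `μ`-strongly convex (w.r.t. the Euclidean norm) over `D = conv(A)`, then the
geometric strong convexity constant satisfies `μ_f^A ≥ μ · PWidth(A)²`. -/
theorem stmt14 (d : ℕ) (μ : ℝ) (hμ : 0 ≤ μ)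
    (f : EuclideanSpace ℝ (Fin d) → ℝ)
    (f' : EuclideanSpace ℝ (Fin d) → EuclideanSpace ℝ (Fin d))
    (A : Finset (EuclideanSpace ℝ (Fin d))) (hA : A.Nonempty)
    (hdiff : ∀ x, HasGradientAt f (f' x) x)
    (hsc : ∀ x ∈ convexHull ℝ (↑A : Set (EuclideanSpace ℝ (Fin d))),
      ∀ y ∈ convexHull ℝ (↑A : Set (EuclideanSpace ℝ (Fin d))),
        f y ≥ f x + ⟪f' x, y - x⟫_ℝ + μ / 2 * ‖y - x‖ ^ 2) :
    μ * PWidth A ^ 2 ≤ mufA f f' A := by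
  classical
  unfold mufA
  by_cases hM : Set.Nonempty {c | ∃ x ∈ convexHull ℝ (↑A : Set (EuclideanSpace ℝ (Fin d))),
    ∃ y ∈ convexHull ℝ (↑A : Set (EuclideanSpace ℝ (Fin d))),
      ⟪f' x, y - x⟫_ℝ < 0 ∧
      c = 2 / gammaA f' A x y ^ 2 * (f y - f x - ⟪f' x, y - x⟫_ℝ)}
  · refine le_csInf hM ?_
    rintro c ⟨x, hx, y, hy, hneg, rfl⟩
    unfold gammaA
    rw [inner_neg_left]
    set sT1 := sInf {t | ∃ S ∈ activeSets (↑A : Set (EuclideanSpace ℝ (Fin d))) x,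
      t = sSup {u | ∃ v ∈ (S : Set (EuclideanSpace ℝ (Fin d))), u = ⟪f' x, v⟫_ℝ}} with hsT1
    set iA := sInf {t | ∃ v ∈ (↑A : Set (EuclideanSpace ℝ (Fin d))), t = ⟪f' x, v⟫_ℝ} with hiA
    obtain ⟨S₀, hS₀⟩ := activeSets_exists hx
    have hT1ne : {t | ∃ S ∈ activeSets (↑A : Set (EuclideanSpace ℝ (Fin d))) x,
        t = sSup {u | ∃ v ∈ (S : Set (EuclideanSpace ℝ (Fin d))), u = ⟪f' x, v⟫_ℝ}}.Nonempty :=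
      ⟨_, S₀, hS₀, rfl⟩
    set N := -⟪f' x, y - x⟫_ℝ with hN'
    have hN : 0 < N := by rw [hN']; linarith
    have hene : y - x ≠ 0 := by
      intro h; rw [h, inner_zero_right] at hneg; linarith
    have hL : 0 < ‖y - x‖ := norm_pos_iff.mpr hene
    have h_lb : PWidth A * (N / ‖y - x‖) + iA ≤ sT1 := by
      rw [hsT1]
      have : PWidth A * (N / ‖y - x‖) + iA
          ≤ sInf {t | ∃ S ∈ activeSets (↑A : Set (EuclideanSpace ℝ (Fin d))) x,
            t = sSup {u | ∃ v ∈ (S : Set (EuclideanSpace ℝ (Fin d))), u = ⟪f' x, v⟫_ℝ}} := by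
        refine le_csInf hT1ne ?_
        rintro t ⟨S, hS, rfl⟩
        have := key_ineq A hx hy (f' x) hneg hS
        rw [← hN'] at this
        rw [← hiA] at this
        linarith
      exact this
    have hbddA : BddBelow {t | ∃ v ∈ (↑A : Set (EuclideanSpace ℝ (Fin d))), t = ⟪f' x, v⟫_ℝ} :=
      (pat1_finite A.finite_toSet _).bddBelow
    have hx_le : ⟪f' x, x⟫_ℝ ≤ sT1 := by
      rw [hsT1]
      refine le_csInf hT1ne ?_
      rintro t ⟨S, hS, rfl⟩
      exact inner_le_sSup_active hS (f' x)
    have hiAlt : iA < ⟪f' x, x⟫_ℝ := by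
      have hy' := hy
      rw [Finset.convexHull_eq] at hy'
      obtain ⟨w, hw0, hw1, hwy⟩ := hy'
      rw [Finset.centerMass_eq_of_sum_1 _ _ hw1] at hwy
      simp only [id_eq] at hwy
      have hsumlt : ∑ a ∈ A, w a * ⟪f' x, a⟫_ℝ < ∑ a ∈ A, w a * ⟪f' x, x⟫_ℝ := by
        have h1 : ∑ a ∈ A, w a * ⟪f' x, a⟫_ℝ = ⟪f' x, y⟫_ℝ := by
          rw [← hwy, inner_sum]
          exact Finset.sum_congr rfl fun a _ => (real_inner_smul_right _ _ _).symm
        have h2 : ∑ a ∈ A, w a * ⟪f' x, x⟫_ℝ = ⟪f' x, x⟫_ℝ := by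
          rw [← Finset.sum_mul, hw1, one_mul]
        have h3 := hneg
        rw [inner_sub_right] at h3
        rw [h1, h2]; linarith
      obtain ⟨a, haA, halt⟩ := Finset.exists_lt_of_sum_lt hsumlt
      have hwa : 0 < w a := by
        rcases (hw0 a haA).eq_or_lt with h | h
        · exfalso; rw [← h] at halt; simp at halt
        · exact h
      have ha2 : ⟪f' x, a⟫_ℝ < ⟪f' x, x⟫_ℝ := (mul_lt_mul_iff_right₀ hwa).mp halt
      calc iA ≤ ⟪f' x, a⟫_ℝ := csInf_le hbddA ⟨a, haA, rfl⟩
        _ < ⟪f' x, x⟫_ℝ := ha2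
    set Dn := sT1 - iA with hDn'
    have hDn : 0 < Dn := by rw [hDn']; linarith
    have hΔ : μ / 2 * ‖y - x‖ ^ 2 ≤ f y - f x - ⟪f' x, y - x⟫_ℝ := by
      have := hsc x hx y hy
      linarith
    have hPWN : PWidth A * (N / ‖y - x‖) ≤ Dn := by rw [hDn']; linarith
    have hrw : (2 : ℝ) / (N / Dn) ^ 2 * (f y - f x - ⟪f' x, y - x⟫_ℝ)
        = 2 * Dn ^ 2 * (f y - f x - ⟪f' x, y - x⟫_ℝ) / N ^ 2 := by
      field_simp
    rw [hrw, le_div_iff₀ (by positivity : (0:ℝ) < N ^ 2)]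
    have hPWN' : PWidth A * N ≤ Dn * ‖y - x‖ := by
      have h := mul_le_mul_of_nonneg_right hPWN hL.le
      calc PWidth A * N = PWidth A * (N / ‖y - x‖) * ‖y - x‖ := by field_simp
        _ ≤ Dn * ‖y - x‖ := h
    have hsq : (PWidth A * N) ^ 2 ≤ (Dn * ‖y - x‖) ^ 2 :=
      pow_le_pow_left₀ (mul_nonneg (pwidth_nonneg A) hN.le) hPWN' 2
    nlinarith [mul_nonneg (sq_nonneg Dn) (sub_nonneg.mpr hΔ),
      mul_nonneg hμ (sub_nonneg.mpr hsq)]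
  · rw [Set.not_nonempty_iff_eq_empty] at hM
    rw [hM, Real.sInf_empty]
    have hinner : ∀ x ∈ convexHull ℝ (↑A : Set (EuclideanSpace ℝ (Fin d))),
        ∀ y ∈ convexHull ℝ (↑A : Set (EuclideanSpace ℝ (Fin d))), 0 ≤ ⟪f' x, y - x⟫_ℝ := by
      intro x hx y hy
      by_contra h
      push_neg at h
      exact Set.eq_empty_iff_forall_notMem.mp hM _ ⟨x, hx, y, hy, h, rfl⟩
    rcases hμ.eq_or_lt with h0 | hpos
    · rw [← h0]; simp
    · have hsing : ∀ y ∈ convexHull ℝ (↑A : Set (EuclideanSpace ℝ (Fin d))),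
          ∀ z ∈ convexHull ℝ (↑A : Set (EuclideanSpace ℝ (Fin d))), y = z := by
        intro y hy z hz
        have h1 := hsc y hy z hz
        have h2 := hsc z hz y hy
        have e1 := hinner y hy z hz
        have e2 := hinner z hz y hy
        have hnr : ‖y - z‖ = ‖z - y‖ := norm_sub_rev _ _
        rw [hnr] at h2
        have h3 : ‖z - y‖ ^ 2 ≤ 0 := by nlinarith
        have h4 : ‖z - y‖ = 0 := by nlinarith [norm_nonneg (z - y), sq_nonneg ‖z - y‖]
        have := sub_eq_zero.mp (norm_eq_zero.mp h4)
        exact this.symm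
      have hempty : {w | ∃ K : Set (EuclideanSpace ℝ (Fin d)),
          IsExposed ℝ (convexHull ℝ (↑A : Set (EuclideanSpace ℝ (Fin d)))) K ∧
          ∃ x ∈ K, ∃ r : EuclideanSpace ℝ (Fin d), r ≠ 0 ∧
            (∃ c : ℝ, 0 ≤ c ∧ ∃ y ∈ K, r = c • (y - x)) ∧
            w = PdirW (K ∩ ↑A) r x} = ∅ := by
        rw [Set.eq_empty_iff_forall_notMem]
        rintro w ⟨K, hK, x, hxK, r, hr, ⟨cc, hcc, y, hyK, hrc⟩, -⟩
        have hsub : K ⊆ convexHull ℝ (↑A : Set (EuclideanSpace ℝ (Fin d))) := hK.subset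
        have : y = x := hsing y (hsub hyK) x (hsub hxK)
        apply hr
        rw [hrc, this, sub_self, smul_zero]
      unfold PWidth
      rw [hempty, Real.sInf_empty]
      norm_num
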